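/- The determinant of a uniformly random correlation matrix converges to 0 (its lower bound) as the dimension grows: D_d converges in probability to 0 as d → ∞; i.e., for every ε > 0, P(D_d > ε) → 0 as d → ∞. -/

import Mathlib

open MeasureTheory ProbabilityTheory Real Filter Finset

/-- The Beta(a,b) distribution on ℝ: density x^(a-1)(1-x)^(b-1)/B(a,b) on (0,1),
where B(a,b) = Γ(a)Γ(b)/Γ(a+b). -/
noncomputable def betaMeasureDensity (a b : ℝ) : Measure ℝ :=
  volume.withDensity fun x =>
    ENNReal.ofReal (if x ∈ Set.Ioo (0 : ℝ) 1 then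
      x ^ (a - 1) * (1 - x) ^ (b - 1) / (Real.Gamma a * Real.Gamma b / Real.Gamma (a + b))
    else 0)

/-- `X` has the Beta(a,b) distribution under `P`. -/
def HasBetaDist {Ω : Type*} [MeasurableSpace Ω] (P : Measure Ω) (X : Ω → ℝ) (a b : ℝ) : Prop :=
  Measurable X ∧ Measure.map X P = betaMeasureDensity a b

lemma betaMeasure_compl_Ioo (a b : ℝ) : betaMeasureDensity a b (Set.Ioo (0:ℝ) 1)ᶜ = 0 := by
  rw [betaMeasureDensity, withDensity_apply _ measurableSet_Ioo.compl]
  calc (∫⁻ x in (Set.Ioo (0:ℝ) 1)ᶜ, ENNReal.ofReal (if x ∈ Set.Ioo (0 : ℝ) 1 then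
      x ^ (a - 1) * (1 - x) ^ (b - 1) / (Real.Gamma a * Real.Gamma b / Real.Gamma (a + b))
    else 0))
      = ∫⁻ _ in (Set.Ioo (0:ℝ) 1)ᶜ, 0 := by
        refine setLIntegral_congr_fun measurableSet_Ioo.compl (fun x hx => ?_)
        rw [if_neg hx, ENNReal.ofReal_zero]
    _ = 0 := lintegral_zero

lemma betaTail {b ε : ℝ} (hb : 1 ≤ b) (hε0 : 0 < ε) (hε1 : ε < 1) :
    betaMeasureDensity 1 b (Set.Ioi ε) ≤ ENNReal.ofReal (b * (1-ε)^b) := by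
  have hb0 : (0:ℝ) < b := lt_of_lt_of_le one_pos hb
  have hΓ : Real.Gamma 1 * Real.Gamma b / Real.Gamma (1 + b) = 1/b := by
    rw [Real.Gamma_one, one_mul, add_comm, Real.Gamma_add_one hb0.ne']
    rw [div_mul_eq_div_div_swap, div_self (Real.Gamma_pos_of_pos hb0).ne']
  rw [betaMeasureDensity, withDensity_apply _ measurableSet_Ioi]
  calc (∫⁻ x in Set.Ioi ε, ENNReal.ofReal (if x ∈ Set.Ioo (0 : ℝ) 1 then
      x ^ ((1:ℝ) - 1) * (1 - x) ^ (b - 1) / (Real.Gamma 1 * Real.Gamma b / Real.Gamma (1 + b))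
    else 0))
      ≤ ∫⁻ x in Set.Ioi ε,
          (Set.Ioo ε 1).indicator (fun _ => ENNReal.ofReal (b * (1-ε)^(b-1))) x := by
        refine setLIntegral_mono (measurable_const.indicator measurableSet_Ioo) fun x hx => ?_
        by_cases hmem : x ∈ Set.Ioo (0:ℝ) 1
        · rw [if_pos hmem, Set.indicator_of_mem (Set.mem_Ioo.2 ⟨hx, hmem.2⟩)]
          apply ENNReal.ofReal_le_ofReal
          rw [hΓ, sub_self, Real.rpow_zero, one_mul, one_div, div_eq_mul_inv, inv_inv]
          rw [mul_comm b]
          refine mul_le_mul_of_nonneg_right ?_ hb0.le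
          exact Real.rpow_le_rpow (by linarith [hmem.2]) (by linarith [hx.out]) (by linarith)
        · rw [if_neg hmem, ENNReal.ofReal_zero]
          exact zero_le
    _ = ENNReal.ofReal (b * (1-ε)^(b-1)) * volume (Set.Ioo ε 1) := by
        rw [lintegral_indicator measurableSet_Ioo, setLIntegral_const,
          Measure.restrict_apply measurableSet_Ioo,
          Set.inter_eq_left.2 Set.Ioo_subset_Ioi_self]
    _ ≤ ENNReal.ofReal (b * (1-ε)^b) := by
        rw [Real.volume_Ioo, ← ENNReal.ofReal_mul (mul_nonneg hb0.le (Real.rpow_nonneg (by linarith) _))]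
        apply ENNReal.ofReal_le_ofReal
        rw [mul_assoc]
        have : (1-ε)^(b-1) * (1 - ε) = (1-ε)^b := by
          rw [← Real.rpow_add_one (by linarith : (1:ℝ)-ε ≠ 0) (b-1), sub_add_cancel]
        rw [this]

lemma tendsto_mul_rpow {r : ℝ} (hr0 : 0 < r) (hr1 : r < 1) :
    Tendsto (fun x : ℝ => x * r ^ x) atTop (nhds 0) := by
  have hc : 0 < -Real.log r := by
    have := Real.log_neg hr0 hr1
    linarith
  set c := -Real.log r with hcdef
  have key : Tendsto (fun y : ℝ => y * Real.exp (-y)) atTop (nhds 0) := by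
    have := Real.tendsto_pow_mul_exp_neg_atTop_nhds_zero 1
    simpa using this
  have comp : Tendsto (fun x : ℝ => (c * x) * Real.exp (-(c * x))) atTop (nhds 0) :=
    key.comp (Tendsto.const_mul_atTop hc tendsto_id)
  have := comp.const_mul (1/c)
  rw [mul_zero] at this
  refine this.congr fun x => ?_
  have hrx : r ^ x = Real.exp (-(c * x)) := by
    rw [Real.rpow_def_of_pos hr0, hcdef]
    ring_nf
  rw [hrx]
  field_simp

theorem stmt17
    {Ω : Type*} [MeasurableSpace Ω] (P : Measure Ω) [IsProbabilityMeasure P]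
    (X : ℕ → ℕ → Ω → ℝ)
    (hindep : ∀ d : ℕ, 2 ≤ d →
      iIndepFun
        (fun j : {j : ℕ // 1 ≤ j ∧ j ≤ d - 1} => X d j) P)
    (hX : ∀ d j : ℕ, 2 ≤ d → 1 ≤ j → j ≤ d - 1 →
      HasBetaDist P (X d j) (((j : ℝ) + 1) / 2) (((d : ℝ) - (j : ℝ)) / 2)) :
    ∀ ε : ℝ, 0 < ε →
      Tendsto (fun d : ℕ => P {ω | ε < (∏ j ∈ Finset.Icc 1 (d - 1), X d j ω)}) atTop (nhds 0) := by
  intro ε hε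
  set ε' : ℝ := min ε (1/2) with hε'def
  have hε'0 : 0 < ε' := lt_min hε (by norm_num)
  have hε'1 : ε' < 1 := lt_of_le_of_lt (min_le_right _ _) (by norm_num)
  have hε'ε : ε' ≤ ε := min_le_left _ _
  have hr0 : (0:ℝ) < 1 - ε' := by linarith
  have hr1 : 1 - ε' < 1 := by linarith
  have hseq : Tendsto (fun d : ℕ => ((d:ℝ)-1)/2) atTop atTop := by
    apply Tendsto.atTop_div_const two_pos
    exact tendsto_atTop_add_const_right _ _ tendsto_natCast_atTop_atTop
  have hu : Tendsto (fun d : ℕ =>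
      ENNReal.ofReal (((d:ℝ)-1)/2 * (1-ε')^(((d:ℝ)-1)/2))) atTop (nhds 0) := by
    rw [← ENNReal.ofReal_zero]
    exact (ENNReal.continuous_ofReal.tendsto 0).comp
      ((tendsto_mul_rpow hr0 hr1).comp hseq)
  refine tendsto_of_tendsto_of_tendsto_of_le_of_le' tendsto_const_nhds hu
    (Eventually.of_forall fun d => zero_le) ?_
  filter_upwards [eventually_ge_atTop 3] with d hd
  have hd2 : 2 ≤ d := by omega
  have hd3 : (3:ℝ) ≤ (d:ℝ) := by exact_mod_cast hd
  have hb : (1:ℝ) ≤ ((d:ℝ)-1)/2 := by linarith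
  have h1 := hX d 1 hd2 le_rfl (by omega)
  have hmap : Measure.map (X d 1) P = betaMeasureDensity 1 (((d:ℝ)-1)/2) := by
    have := h1.2
    norm_num at this
    exact this
  set N : Set Ω := ⋃ j ∈ Finset.Icc 1 (d-1), X d j ⁻¹' (Set.Ioo (0:ℝ) 1)ᶜ with hNdef
  have hnull : P N = 0 := by
    refine (measure_biUnion_null_iff (Finset.Icc 1 (d-1)).countable_toSet).2 fun j hj => ?_
    simp only [Finset.mem_coe, Finset.mem_Icc] at hj
    have hj' := hX d j hd2 hj.1 hj.2
    rw [← Measure.map_apply hj'.1 measurableSet_Ioo.compl, hj'.2]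
    exact betaMeasure_compl_Ioo _ _
  calc P {ω | ε < ∏ j ∈ Finset.Icc 1 (d - 1), X d j ω}
      ≤ P ({ω | ε' < X d 1 ω} ∪ N) := by
        apply measure_mono
        intro ω hω
        by_cases hN : ω ∈ N
        · exact Or.inr hN
        · left
          have hmem : ∀ j ∈ Finset.Icc 1 (d-1), X d j ω ∈ Set.Ioo (0:ℝ) 1 := by
            intro j hj
            by_contra hcon
            exact hN (Set.mem_biUnion hj hcon)
          have h1mem : 1 ∈ Finset.Icc 1 (d-1) := by
            simp only [Finset.mem_Icc]
            omega
          have hprodle : ∏ j ∈ Finset.Icc 1 (d-1), X d j ω ≤ X d 1 ω := by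
            rw [← Finset.mul_prod_erase _ _ h1mem]
            have hle1 : ∏ j ∈ (Finset.Icc 1 (d-1)).erase 1, X d j ω ≤ 1 :=
              Finset.prod_le_one
                (fun j hj => (hmem j (Finset.mem_of_mem_erase hj)).1.le)
                (fun j hj => (hmem j (Finset.mem_of_mem_erase hj)).2.le)
            calc X d 1 ω * ∏ j ∈ (Finset.Icc 1 (d-1)).erase 1, X d j ω
                ≤ X d 1 ω * 1 :=
                  mul_le_mul_of_nonneg_left hle1 (hmem 1 h1mem).1.le
              _ = X d 1 ω := mul_one _
          have : ε < ∏ j ∈ Finset.Icc 1 (d-1), X d j ω := hω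
          show ε' < X d 1 ω
          linarith
    _ ≤ P {ω | ε' < X d 1 ω} + P N := measure_union_le _ _
    _ = betaMeasureDensity 1 (((d:ℝ)-1)/2) (Set.Ioi ε') := by
        rw [hnull, add_zero,
          show {ω | ε' < X d 1 ω} = X d 1 ⁻¹' Set.Ioi ε' from rfl,
          ← Measure.map_apply h1.1 measurableSet_Ioi, hmap]
    _ ≤ ENNReal.ofReal (((d:ℝ)-1)/2 * (1-ε')^(((d:ℝ)-1)/2)) := betaTail hb hε'0 hε'1
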